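/- Assume G ≅ C_{n1} ⊕ … ⊕ C_{nr} with 1 < n1 | … | nr and D(G) ≥ 4. Let d ∈ Δ1(G) with d ≥ max{⌊nr/2⌋, ⌊(r+1)/2⌋}. If d ≥ nr − 1, then ρ*(G, d) = K(G, d). -/

import Mathlib

/- Common definitions: zero-sum sequences over a finite abelian group,
   sets of lengths, the system of sets of lengths, the Davenport constant,
   sets of distances, elasticities, AAPs, Δ₁(G), ρ(G,d,k), ρ(G,d), ρ*(G,d),
   cross numbers, K(G₀), K(G,d), LCN-sets, Δ*(G). -/

open scoped Classical

section Defs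

variable {G : Type*} [AddCommGroup G]

/-- The support of a sequence (multiset) over `G`. -/
def suppSet (A : Multiset G) : Set G := {g | g ∈ A}

/-- `A` is a minimal zero-sum sequence (an atom of `𝓑(G₀)`) over `G₀ ⊆ G`:
a nontrivial zero-sum sequence with terms in `G₀` such that every proper
nontrivial subsequence has nonzero sum. -/
def IsMinZeroSum (G0 : Set G) (A : Multiset G) : Prop :=
  A ≠ 0 ∧ (∀ g ∈ A, g ∈ G0) ∧ A.sum = 0 ∧
    ∀ T : Multiset G, T ≤ A → T.sum = 0 → T = 0 ∨ T = A

/-- `B` is a zero-sum sequence over `G₀ ⊆ G` (an element of `𝓑(G₀)`). -/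
def IsZeroSumSeq (G0 : Set G) (B : Multiset G) : Prop :=
  (∀ g ∈ B, g ∈ G0) ∧ B.sum = 0

/-- The set of lengths `L(B)` of a zero-sum sequence `B` over `G₀`:
all `k` such that `B` is a product of `k` atoms of `𝓑(G₀)`.
(For the trivial sequence this is `{0}`.) -/
def lengthSet (G0 : Set G) (B : Multiset G) : Set ℕ :=
  {k | ∃ U : Fin k → Multiset G, (∀ i, IsMinZeroSum G0 (U i)) ∧ B = ∑ i, U i}

/-- The system of sets of lengths `𝓛(G₀)`. -/
def systemL (G0 : Set G) : Set (Set ℕ) :=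
  {L | ∃ B : Multiset G, IsZeroSumSeq G0 B ∧ L = lengthSet G0 B}

/-- The Davenport constant `D(G)`: the maximal length of a minimal zero-sum
sequence over `G`. -/
noncomputable def davenport (G : Type*) [AddCommGroup G] : ℕ :=
  sSup {m | ∃ A : Multiset G, IsMinZeroSum (Set.univ : Set G) A ∧ Multiset.card A = m}

/-- The set of successive distances `Δ(L)` of a set `L ⊆ ℕ`. -/
def deltaOf (L : Set ℕ) : Set ℕ :=
  {d | 0 < d ∧ ∃ a, a ∈ L ∧ a + d ∈ L ∧ ∀ c ∈ L, ¬(a < c ∧ c < a + d)}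

/-- `Δ(G₀) = ⋃_{L ∈ 𝓛(G₀)} Δ(L)`. -/
def deltaG0 (G0 : Set G) : Set ℕ := ⋃ L ∈ systemL G0, deltaOf L

/-- `Δ*(G) = {min Δ(G₀) : G₀ ⊆ G with Δ(G₀) ≠ ∅}`. -/
def deltaStar (G : Type*) [AddCommGroup G] : Set ℕ :=
  {d | ∃ G0 : Set G, deltaG0 G0 ≠ ∅ ∧ d = sInf (deltaG0 G0)}

/-- The elasticity `ρ(L) = max L / min L` of a (finite) set `L ⊆ ℕ`,
with the convention `ρ({0}) = 1`. -/
noncomputable def rhoL (L : Set ℕ) : ℝ :=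
  if sInf L = 0 then 1 else ((sSup L : ℕ) : ℝ) / ((sInf L : ℕ) : ℝ)

/-- The elasticity `ρ(G₀) = sup {ρ(L) : L ∈ 𝓛(G₀)}`. -/
noncomputable def rhoG0 (G0 : Set G) : ℝ := sSup (rhoL '' systemL G0)

/-- `L` (a set of naturals) is an almost arithmetical progression (AAP)
with difference `d`, length `ℓ` and bound `M`:
`L = y + (L' ∪ {0, d, …, ℓd} ∪ L'') ⊆ y + dℤ` with `L' ⊆ [−M, −1]` and
`L'' ⊆ ℓd + [1, M]`. -/
def IsAAP (L : Set ℕ) (d ℓ M : ℕ) : Prop :=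
  ∃ (y : ℤ) (L1 L2 : Set ℤ),
    L1 ⊆ Set.Icc (-(M : ℤ)) (-1) ∧
    L2 ⊆ Set.Icc ((ℓ : ℤ) * d + 1) ((ℓ : ℤ) * d + M) ∧
    ((fun x : ℕ => (x : ℤ)) '' L) =
      (fun x => y + x) '' (L1 ∪ (fun i : ℤ => (d : ℤ) * i) '' Set.Icc (0 : ℤ) (ℓ : ℤ) ∪ L2) ∧
    (∀ x ∈ L, (d : ℤ) ∣ ((x : ℤ) - y))

/-- `Δ₁(G)`: the set of `d ∈ ℕ` such that for every `k` there is some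
`L ∈ 𝓛(G)` which is an AAP with difference `d` and length at least `k`. -/
def delta1 (G : Type*) [AddCommGroup G] : Set ℕ :=
  {d | 0 < d ∧ ∀ k : ℕ, ∃ L ∈ systemL (Set.univ : Set G), ∃ ℓ ≥ k, ∃ M : ℕ, IsAAP L d ℓ M}

/-- `ρ(G, d, k)`: the supremum of elasticities of sets of lengths of `G` which
are AAPs with difference `d` and length at least `k`. -/
noncomputable def rhoGdk (G : Type*) [AddCommGroup G] (d k : ℕ) : ℝ :=
  sSup (rhoL '' {L | L ∈ systemL (Set.univ : Set G) ∧ ∃ ℓ ≥ k, ∃ M : ℕ, IsAAP L d ℓ M})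

/-- `ρ(G, d)`: the limit of the decreasing sequence `(ρ(G, d, k))_k`,
i.e. its infimum. -/
noncomputable def rhoGd (G : Type*) [AddCommGroup G] (d : ℕ) : ℝ :=
  ⨅ k : ℕ, rhoGdk G d k

/-- `ρ*(G, d) = max {ρ(G₀) : G₀ ⊆ G non-half-factorial with d ∣ min Δ(G₀)}`. -/
noncomputable def rhoStar (G : Type*) [AddCommGroup G] (d : ℕ) : ℝ :=
  sSup {x | ∃ G0 : Set G, deltaG0 G0 ≠ ∅ ∧ d ∣ sInf (deltaG0 G0) ∧ x = rhoG0 G0}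

/-- The cross number `k(S) = Σ_{g ∈ S} 1/ord(g)` of a sequence `S`. -/
noncomputable def crossNum (S : Multiset G) : ℝ :=
  (S.map (fun g => (1 : ℝ) / (addOrderOf g))).sum

/-- `K(G₀) = max {k(A) : A ∈ 𝓐(G₀)}`, the cross number of `G₀`. -/
noncomputable def KG0 (G0 : Set G) : ℝ :=
  sSup {x | ∃ A : Multiset G, IsMinZeroSum G0 A ∧ x = crossNum A}

/-- `K(G, d) = max {K(G₀) : G₀ ⊆ G non-half-factorial with d ∣ min Δ(G₀)}`. -/
noncomputable def KGd (G : Type*) [AddCommGroup G] (d : ℕ) : ℝ :=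
  sSup {x | ∃ G0 : Set G, deltaG0 G0 ≠ ∅ ∧ d ∣ sInf (deltaG0 G0) ∧ x = KG0 G0}

/-- `G₀` is an LCN-set: `k(A) ≥ 1` for every atom `A` of `𝓑(G₀)`. -/
def IsLCN (G0 : Set G) : Prop :=
  ∀ A : Multiset G, IsMinZeroSum G0 A → 1 ≤ crossNum A

end Defs

lemma orders_divide {r : ℕ} (n : Fin r → ℕ) {G : Type*} [AddCommGroup G]
    (hn : ∀ i, 1 < n i)
    (φ : G ≃+ (∀ i : Fin r, ZMod (n i))) (e : ℕ) (hne : ∀ i, n i ∣ e) (g : G) :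
    addOrderOf g ∣ e := by
  rw [addOrderOf_dvd_iff_nsmul_eq_zero]
  apply φ.injective
  rw [map_nsmul, map_zero]
  funext i
  haveI : NeZero (n i) := ⟨by have := hn i; omega⟩
  rw [Pi.smul_apply, Pi.zero_apply, nsmul_eq_mul]
  have hz : ((e : ℕ) : ZMod (n i)) = 0 :=
    (ZMod.natCast_eq_zero_iff _ (n i)).mpr (hne i)
  rw [hz, zero_mul]
section Aux
set_option linter.unusedSectionVars false

variable {G : Type*} [AddCommGroup G]

lemma crossNum_add' (X Y : Multiset G) :
    crossNum (X + Y) = crossNum X + crossNum Y := by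
  simp [crossNum]

lemma crossNum_sum' {ι : Type*} (s : Finset ι) (U : ι → Multiset G) :
    crossNum (∑ i ∈ s, U i) = ∑ i ∈ s, crossNum (U i) := by
  induction s using Finset.cons_induction with
  | empty => simp [crossNum]
  | cons a s ha ih => rw [Finset.sum_cons, crossNum_add', ih, Finset.sum_cons]

lemma card_finsum' {ι : Type*} (s : Finset ι) (U : ι → Multiset G) :
    Multiset.card (∑ i ∈ s, U i) = ∑ i ∈ s, Multiset.card (U i) := by
  induction s using Finset.cons_induction with
  | empty => simp
  | cons a s ha ih => rw [Finset.sum_cons, Multiset.card_add, ih, Finset.sum_cons]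

lemma crossNum_le_card' (S : Multiset G) : crossNum S ≤ Multiset.card S := by
  have h := Multiset.sum_le_card_nsmul (S.map (fun g => (1:ℝ)/(addOrderOf g))) 1 ?_
  · simpa [crossNum] using h
  · intro x hx
    obtain ⟨g, _, rfl⟩ := Multiset.mem_map.mp hx
    rcases Nat.eq_zero_or_pos (addOrderOf g) with h0 | h0
    · simp [h0]
    · rw [div_le_one (by exact_mod_cast h0)]
      exact_mod_cast h0

lemma isMinZeroSum_replicate' {G0 : Set G} {g : G} (hg : g ∈ G0) (h0 : 0 < addOrderOf g) :
    IsMinZeroSum G0 (Multiset.replicate (addOrderOf g) g) := by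
  refine ⟨?_, ?_, ?_, ?_⟩
  · intro h
    have := congrArg Multiset.card h
    simp only [Multiset.card_replicate, Multiset.card_zero] at this
    omega
  · intro x hx
    rw [Multiset.eq_of_mem_replicate hx]
    exact hg
  · rw [Multiset.sum_replicate]
    exact addOrderOf_nsmul_eq_zero g
  · intro T hT hsum
    have hTall : T = Multiset.replicate (Multiset.card T) g := by
      rw [Multiset.eq_replicate_card]
      intro b hb
      exact Multiset.eq_of_mem_replicate (Multiset.mem_of_le hT hb)
    have hcle : Multiset.card T ≤ addOrderOf g := by
      simpa using Multiset.card_le_card hT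
    have hz : Multiset.card T • g = 0 := by
      rw [← Multiset.sum_replicate, ← hTall]; exact hsum
    have hdv : addOrderOf g ∣ Multiset.card T := addOrderOf_dvd_of_nsmul_eq_zero hz
    rcases Nat.eq_zero_or_pos (Multiset.card T) with h | h
    · left; exact Multiset.card_eq_zero.mp h
    · right
      have h1 : addOrderOf g ≤ Multiset.card T := Nat.le_of_dvd h hdv
      have h2 : Multiset.card T = addOrderOf g := le_antisymm hcle h1
      rw [hTall, h2]

lemma list_mem_lengthSet' {G0 : Set G} (l : List (Multiset G))
    (h1 : ∀ T ∈ l, IsMinZeroSum G0 T) : l.length ∈ lengthSet G0 l.sum := by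
  refine ⟨fun i => l.get i, fun i => h1 _ (l.get_mem _), ?_⟩
  rw [← List.sum_ofFn, List.ofFn_get]

lemma multiset_mem_lengthSet' {G0 : Set G} (S : Multiset (Multiset G))
    (h1 : ∀ T ∈ S, IsMinZeroSum G0 T) : Multiset.card S ∈ lengthSet G0 S.sum := by
  revert h1
  induction S using Quotient.inductionOn with
  | h l =>
    intro h1
    simpa using list_mem_lengthSet' l (by simpa using h1)

lemma nsmul_mem_lengthSet' {G0 : Set G} {A : Multiset G} (hA : IsMinZeroSum G0 A) (m : ℕ) :
    m ∈ lengthSet G0 (m • A) :=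
  ⟨fun _ => A, fun _ => hA, by simp⟩

lemma nsmul_singleton' (e : ℕ) (a : G) : e • ({a} : Multiset G) = Multiset.replicate e a := by
  rw [← Multiset.replicate_one, Multiset.nsmul_replicate, mul_one]

lemma map_replicate_sum' (e : ℕ) (A : Multiset G) :
    (A.map (fun g => Multiset.replicate e g)).sum = e • A := by
  induction A using Multiset.induction_on with
  | empty => simp
  | cons a s ih =>
    rw [Multiset.map_cons, Multiset.sum_cons, ih, ← Multiset.singleton_add, smul_add,
      nsmul_singleton']

lemma sum_nsmul' (n : ℕ) (s : Multiset G) : (n • s).sum = n • s.sum := by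
  induction n with
  | zero => simp
  | succ k ih => rw [succ_nsmul, succ_nsmul, Multiset.sum_add, ih]

lemma bind_factorization' {G0 : Set G} {A : Multiset G} (hA : IsMinZeroSum G0 A)
    (e : ℕ) (he : 0 < e) (hord : ∀ g ∈ A, addOrderOf g ∣ e) :
    (A.map (fun g => e / addOrderOf g)).sum ∈ lengthSet G0 (e • A) ∧
    (((A.map (fun g => e / addOrderOf g)).sum : ℕ) : ℝ) = e * crossNum A := by
  have hpos : ∀ g ∈ A, 0 < addOrderOf g := by
    intro g hg
    rcases Nat.eq_zero_or_pos (addOrderOf g) with h | h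
    · exfalso
      have := hord g hg
      rw [h] at this
      rw [zero_dvd_iff] at this
      omega
    · exact h
  set S := A.bind (fun g => Multiset.replicate (e / addOrderOf g)
    (Multiset.replicate (addOrderOf g) g)) with hS
  have hcard : Multiset.card S = (A.map (fun g => e / addOrderOf g)).sum := by
    rw [hS, Multiset.card_bind]
    congr 1
    exact Multiset.map_congr rfl (fun g _ => by simp)
  have hsum : S.sum = e • A := by
    rw [hS, Multiset.sum_bind]
    have heq : ∀ g ∈ A, (Multiset.replicate (e / addOrderOf g)
        (Multiset.replicate (addOrderOf g) g)).sum = Multiset.replicate e g := by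
      intro g hg
      rw [Multiset.sum_replicate, Multiset.nsmul_replicate, Nat.div_mul_cancel (hord g hg)]
    rw [Multiset.map_congr rfl heq, map_replicate_sum']
  have hmem : ∀ T ∈ S, IsMinZeroSum G0 T := by
    intro T hT
    rw [hS] at hT
    obtain ⟨g, hg, hT⟩ := Multiset.mem_bind.mp hT
    rw [Multiset.eq_of_mem_replicate hT]
    exact isMinZeroSum_replicate' (hA.2.1 g hg) (hpos g hg)
  constructor
  · rw [← hcard, ← hsum]
    exact multiset_mem_lengthSet' S hmem
  · rw [crossNum, ← Multiset.sum_map_mul_left]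
    rw [Nat.cast_multiset_sum, Multiset.map_map]
    congr 1
    apply Multiset.map_congr rfl
    intro g hg
    have h1 : ((addOrderOf g : ℕ) : ℝ) ≠ 0 := by
      exact_mod_cast (hpos g hg).ne'
    simp only [Function.comp_apply]
    rw [Nat.cast_div (hord g hg) h1]
    field_simp

lemma lengthSet_le_card' {G0 : Set G} {B : Multiset G} {k : ℕ} (hk : k ∈ lengthSet G0 B) :
    k ≤ Multiset.card B := by
  obtain ⟨U, hU, rfl⟩ := hk
  rw [card_finsum']
  calc k = ∑ _i : Fin k, 1 := by simp
  _ ≤ _ := Finset.sum_le_sum (fun i _ => Multiset.card_pos.mpr (hU i).1)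

lemma zero_mem_lengthSet' {G0 : Set G} {B : Multiset G} (h : 0 ∈ lengthSet G0 B) : B = 0 := by
  obtain ⟨U, _, rfl⟩ := h
  simp

lemma lcn_le_crossNum' {G0 : Set G} (hl : IsLCN G0) {B : Multiset G} {k : ℕ}
    (hk : k ∈ lengthSet G0 B) : (k : ℝ) ≤ crossNum B := by
  obtain ⟨U, hU, rfl⟩ := hk
  rw [crossNum_sum']
  calc (k:ℝ) = ∑ _i : Fin k, (1:ℝ) := by simp
  _ ≤ _ := Finset.sum_le_sum (fun i _ => hl _ (hU i))

lemma crossNum_le_mul' {G0 : Set G} {B : Multiset G} {k : ℕ} (hk : k ∈ lengthSet G0 B) (C : ℝ)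
    (hC : ∀ A : Multiset G, IsMinZeroSum G0 A → crossNum A ≤ C) : crossNum B ≤ k * C := by
  obtain ⟨U, hU, rfl⟩ := hk
  rw [crossNum_sum']
  calc ∑ i, crossNum (U i) ≤ ∑ _i : Fin k, C := Finset.sum_le_sum (fun i _ => hC _ (hU i))
  _ = k * C := by simp [mul_comm]

lemma card_le_of_isMinZeroSum' [Fintype G] {G0 : Set G} {A : Multiset G}
    (hA : IsMinZeroSum G0 A) : Multiset.card A ≤ Fintype.card G := by
  by_contra hcon
  push_neg at hcon
  obtain ⟨l, rfl⟩ : ∃ l : List G, A = ↑l := ⟨A.toList, (Multiset.coe_toList A).symm⟩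
  rw [Multiset.coe_card] at hcon
  have key : ∀ i j : Fin l.length, (i:ℕ) < (j:ℕ) →
      (l.take ((i:ℕ)+1)).sum = (l.take ((j:ℕ)+1)).sum → False := by
    intro i j hlt heq
    set T := (l.take ((j:ℕ)+1)).drop ((i:ℕ)+1) with hTdef
    have hsub : List.Sublist T l :=
      ((l.take ((j:ℕ)+1)).drop_sublist ((i:ℕ)+1)).trans (l.take_sublist ((j:ℕ)+1))
    have hle : (↑T : Multiset G) ≤ ↑l := Multiset.coe_le.mpr hsub.subperm
    have hsplit : l.take ((i:ℕ)+1) ++ T = l.take ((j:ℕ)+1) := by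
      have h1 : (l.take ((j:ℕ)+1)).take ((i:ℕ)+1) = l.take ((i:ℕ)+1) := by
        rw [List.take_take]
        congr 1
        omega
      conv_lhs => rw [← h1]
      exact List.take_append_drop _ _
    have hTsum : T.sum = 0 := by
      have h2 := congrArg List.sum hsplit
      rw [List.sum_append] at h2
      have h3 : (l.take ((i:ℕ)+1)).sum + T.sum = (l.take ((i:ℕ)+1)).sum + 0 := by
        rw [add_zero, h2, ← heq]
      exact add_left_cancel h3
    have hjlt : (j:ℕ) < l.length := j.2
    have hlen : T.length = (j:ℕ) - (i:ℕ) := by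
      rw [hTdef, List.length_drop, List.length_take]
      omega
    rcases hA.2.2.2 (↑T) hle (by simpa using hTsum) with h0 | hAll
    · have : T.length = 0 := by simpa using congrArg Multiset.card h0
      omega
    · have : T.length = l.length := by simpa using congrArg Multiset.card hAll
      omega
  have hcard : Fintype.card G < Fintype.card (Fin l.length) := by simpa using hcon
  obtain ⟨i, j, hij, hq⟩ := Fintype.exists_ne_map_eq_of_card_lt
    (fun i : Fin l.length => (l.take ((i:ℕ)+1)).sum) hcard
  rcases hij.lt_or_gt with h | h
  · exact key i j h hq
  · exact key j i h hq.symm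

lemma rho_eq_K [Fintype G] (e : ℕ) (he : 2 ≤ e) (hord : ∀ g : G, addOrderOf g ∣ e)
    (G0 : Set G) (hne : deltaG0 G0 ≠ ∅) (hmin : e - 1 ≤ sInf (deltaG0 G0)) :
    rhoG0 G0 = KG0 G0 := by
  have hposord : ∀ g : G, 0 < addOrderOf g := by
    intro g
    rcases Nat.eq_zero_or_pos (addOrderOf g) with h | h
    · exfalso
      have := hord g
      rw [h, zero_dvd_iff] at this
      omega
    · exact h
  obtain ⟨A0, hA0⟩ : ∃ A : Multiset G, IsMinZeroSum G0 A := by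
    obtain ⟨d0, hd0⟩ := Set.nonempty_iff_ne_empty.mpr hne
    simp only [deltaG0, Set.mem_iUnion, exists_prop] at hd0
    obtain ⟨L, hL, hd0⟩ := hd0
    obtain ⟨B, hB, rfl⟩ := hL
    obtain ⟨hpos, a, haL, haD, _⟩ := hd0
    obtain ⟨U, hU, _⟩ := haD
    exact ⟨U ⟨0, by omega⟩, hU _⟩
  have hsys : ∀ A : Multiset G, IsMinZeroSum G0 A → lengthSet G0 (e • A) ∈ systemL G0 := by
    intro A hA
    refine ⟨e • A, ⟨?_, ?_⟩, rfl⟩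
    · intro g hg
      exact hA.2.1 g ((Multiset.mem_nsmul.mp hg).2)
    · rw [sum_nsmul', hA.2.2.1, smul_zero]
  have hlcn : IsLCN G0 := by
    by_contra hcon
    rw [IsLCN] at hcon
    push_neg at hcon
    obtain ⟨A, hA, hlt⟩ := hcon
    have hge2 : 2 ≤ Multiset.card A := by
      by_contra hcc
      have hge1 : 0 < Multiset.card A := Multiset.card_pos.mpr hA.1
      have h1 : Multiset.card A = 1 := by omega
      obtain ⟨g, rfl⟩ := Multiset.card_eq_one.mp h1
      have hg0 : g = 0 := by simpa using hA.2.2.1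
      rw [hg0] at hlt
      simp [crossNum] at hlt
    obtain ⟨htmem, htcast⟩ := bind_factorization' hA e (by omega) (fun g _ => hord g)
    set t := (A.map (fun g => e / addOrderOf g)).sum with htdef
    have hte : t < e := by
      have h1 : (t:ℝ) < e := by
        rw [htcast]
        have he0 : (0:ℝ) < e := by exact_mod_cast (by omega : 0 < e)
        nlinarith
      exact_mod_cast h1
    have ht2 : 2 ≤ t := by
      have hone : ∀ x ∈ A.map (fun g => e / addOrderOf g), 1 ≤ x := by
        intro x hx
        obtain ⟨g, hg, rfl⟩ := Multiset.mem_map.mp hx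
        rw [Nat.one_le_div_iff (hposord g)]
        exact Nat.le_of_dvd (by omega) (hord g)
      have := Multiset.card_nsmul_le_sum hone
      simp only [smul_eq_mul, mul_one, Multiset.card_map] at this
      omega
    have hemem : e ∈ lengthSet G0 (e • A) := nsmul_mem_lengthSet' hA e
    have hLsys : lengthSet G0 (e • A) ∈ systemL G0 := hsys A hA
    set Sd := {c | c ∈ lengthSet G0 (e • A) ∧ t ≤ c ∧ c < e} with hSd
    have hSne : Sd.Nonempty := ⟨t, htmem, le_refl t, hte⟩
    have hSbdd : BddAbove Sd := ⟨e, fun c hc => le_of_lt hc.2.2⟩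
    have haS : sSup Sd ∈ Sd := Nat.sSup_mem hSne hSbdd
    set a := sSup Sd with hadef
    have hta : t ≤ a := haS.2.1
    have hae : a < e := haS.2.2
    have hgap : (e - a) ∈ deltaOf (lengthSet G0 (e • A)) := by
      refine ⟨by omega, a, haS.1, ?_, ?_⟩
      · have h1 : a + (e - a) = e := by omega
        rw [h1]
        exact hemem
      · rintro c hc ⟨hc1, hc2⟩
        have hclt : c < e := by omega
        have hcS : c ∈ Sd := ⟨hc, by omega, hclt⟩
        have := le_csSup hSbdd hcS
        omega
    have hgap2 : (e - a) ∈ deltaG0 G0 := Set.mem_biUnion hLsys hgap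
    have h1 : sInf (deltaG0 G0) ≤ e - a := Nat.sInf_le hgap2
    omega
  set Kset := {x : ℝ | ∃ A : Multiset G, IsMinZeroSum G0 A ∧ x = crossNum A} with hKset
  have hKset_ne : Kset.Nonempty := ⟨crossNum A0, A0, hA0, rfl⟩
  have hKbdd : BddAbove Kset := by
    refine ⟨(Fintype.card G : ℝ), ?_⟩
    rintro x ⟨A, hA, rfl⟩
    calc crossNum A ≤ Multiset.card A := crossNum_le_card' A
    _ ≤ Fintype.card G := by exact_mod_cast card_le_of_isMinZeroSum' hA
  have hK_ge : ∀ A : Multiset G, IsMinZeroSum G0 A → crossNum A ≤ KG0 G0 := by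
    intro A hA
    exact le_csSup hKbdd ⟨A, hA, rfl⟩
  have hK1 : 1 ≤ KG0 G0 := le_trans (hlcn _ hA0) (hK_ge _ hA0)
  have hrhoLe : ∀ L ∈ systemL G0, rhoL L ≤ KG0 G0 := by
    rintro L ⟨B, hB, rfl⟩
    by_cases hz : sInf (lengthSet G0 B) = 0
    · rw [rhoL, if_pos hz]
      exact hK1
    · rw [rhoL, if_neg hz]
      have hLne : (lengthSet G0 B).Nonempty := by
        by_contra h
        rw [Set.not_nonempty_iff_eq_empty] at h
        rw [h] at hz
        simp at hz
      have hbdd : BddAbove (lengthSet G0 B) :=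
        ⟨Multiset.card B, fun k hk => lengthSet_le_card' hk⟩
      have hsup_mem := Nat.sSup_mem hLne hbdd
      have hinf_mem := Nat.sInf_mem hLne
      have h1 : ((sSup (lengthSet G0 B) : ℕ) : ℝ) ≤ crossNum B := lcn_le_crossNum' hlcn hsup_mem
      have h2 : crossNum B ≤ ((sInf (lengthSet G0 B) : ℕ) : ℝ) * KG0 G0 :=
        crossNum_le_mul' hinf_mem _ hK_ge
      have hposInf : (0:ℝ) < ((sInf (lengthSet G0 B) : ℕ) : ℝ) := by
        exact_mod_cast Nat.pos_of_ne_zero hz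
      rw [div_le_iff₀ hposInf]
      calc ((sSup (lengthSet G0 B) : ℕ) : ℝ) ≤ crossNum B := h1
      _ ≤ ((sInf (lengthSet G0 B) : ℕ) : ℝ) * KG0 G0 := h2
      _ = KG0 G0 * ((sInf (lengthSet G0 B) : ℕ) : ℝ) := mul_comm _ _
  have hrbdd : BddAbove (rhoL '' systemL G0) := by
    refine ⟨KG0 G0, ?_⟩
    rintro x ⟨L, hL, rfl⟩
    exact hrhoLe L hL
  have hsysne : (systemL G0).Nonempty :=
    ⟨lengthSet G0 0, 0, ⟨fun g hg => absurd hg (Multiset.notMem_zero g), Multiset.sum_zero⟩, rfl⟩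
  apply le_antisymm
  · apply csSup_le (hsysne.image rhoL)
    rintro x ⟨L, hL, rfl⟩
    exact hrhoLe L hL
  · apply csSup_le hKset_ne
    rintro x ⟨A, hA, rfl⟩
    obtain ⟨htmem, htcast⟩ := bind_factorization' hA e (by omega) (fun g _ => hord g)
    set t := (A.map (fun g => e / addOrderOf g)).sum with htdef
    have hemem : e ∈ lengthSet G0 (e • A) := nsmul_mem_lengthSet' hA e
    have hLsys : lengthSet G0 (e • A) ∈ systemL G0 := hsys A hA
    have hBne : (e • A) ≠ 0 := by
      intro h
      have h1 := congrArg Multiset.card h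
      rw [Multiset.card_nsmul, Multiset.card_zero] at h1
      have h2 : 0 < Multiset.card A := Multiset.card_pos.mpr hA.1
      rcases Nat.mul_eq_zero.mp h1 with h | h <;> omega
    have hz : sInf (lengthSet G0 (e • A)) ≠ 0 := by
      intro h
      have h0 : (0:ℕ) ∈ lengthSet G0 (e • A) := h ▸ Nat.sInf_mem ⟨e, hemem⟩
      exact hBne (zero_mem_lengthSet' h0)
    have hbdd : BddAbove (lengthSet G0 (e • A)) :=
      ⟨Multiset.card (e • A), fun k hk => lengthSet_le_card' hk⟩
    have hsupt : (t:ℝ) ≤ ((sSup (lengthSet G0 (e • A)) : ℕ) : ℝ) := by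
      exact_mod_cast le_csSup hbdd htmem
    have hinfe : ((sInf (lengthSet G0 (e • A)) : ℕ) : ℝ) ≤ (e:ℝ) := by
      exact_mod_cast Nat.sInf_le hemem
    have hinfpos : (0:ℝ) < ((sInf (lengthSet G0 (e • A)) : ℕ) : ℝ) := by
      exact_mod_cast Nat.pos_of_ne_zero hz
    have hrle : crossNum A ≤ rhoL (lengthSet G0 (e • A)) := by
      rw [rhoL, if_neg hz]
      have he0 : (0:ℝ) < e := by exact_mod_cast (by omega : 0 < e)
      have hcA : crossNum A = (t:ℝ) / e := by
        rw [htcast]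
        field_simp
      rw [hcA]
      exact div_le_div₀ (le_trans (by positivity) hsupt) hsupt hinfpos hinfe
    calc crossNum A ≤ rhoL (lengthSet G0 (e • A)) := hrle
    _ ≤ rhoG0 G0 := le_csSup hrbdd (Set.mem_image_of_mem rhoL hLsys)

end Aux
/-- If `G ≅ C_{n₁} ⊕ … ⊕ C_{n_r}` with `1 < n₁ ∣ … ∣ n_r`,
`D(G) ≥ 4`, `d ∈ Δ₁(G)`, `d ≥ max {⌊n_r/2⌋, ⌊(r+1)/2⌋}` and `d ≥ n_r − 1`,
then `ρ*(G, d) = K(G, d)`. -/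
theorem stmt8 {G : Type*} [AddCommGroup G] [Fintype G]
    (r : ℕ) (hr : 0 < r) (n : Fin r → ℕ) (hn : ∀ i, 1 < n i)
    (hdvd : ∀ i j : Fin r, i ≤ j → n i ∣ n j)
    (hG : Nonempty (G ≃+ (∀ i : Fin r, ZMod (n i))))
    (hD : 4 ≤ davenport G)
    (d : ℕ) (hd : d ∈ delta1 G)
    (hd1 : max (n ⟨r - 1, by omega⟩ / 2) ((r + 1) / 2) ≤ d) (hd2 : n ⟨r - 1, by omega⟩ - 1 ≤ d) :
    rhoStar G d = KGd G d := by
  obtain ⟨φ⟩ := hG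
  have he2 : 2 ≤ n ⟨r - 1, by omega⟩ := hn _
  have hord : ∀ g : G, addOrderOf g ∣ n ⟨r - 1, by omega⟩ :=
    orders_divide n hn φ _ (fun i => hdvd i ⟨r - 1, by omega⟩
      (by rw [Fin.le_def]; have := i.2; simp; omega))
  have key : ∀ G0 : Set G, deltaG0 G0 ≠ ∅ → d ∣ sInf (deltaG0 G0) → rhoG0 G0 = KG0 G0 := by
    intro G0 h1 h2
    apply rho_eq_K (n ⟨r - 1, by omega⟩) he2 hord G0 h1
    have hpos : 0 < sInf (deltaG0 G0) := by
      have hmem := Nat.sInf_mem (Set.nonempty_iff_ne_empty.mpr h1)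
      simp only [deltaG0, Set.mem_iUnion, exists_prop] at hmem
      obtain ⟨L, hL, hmem⟩ := hmem
      exact hmem.1
    have hdle : d ≤ sInf (deltaG0 G0) := Nat.le_of_dvd hpos h2
    omega
  rw [rhoStar, KGd]
  congr 1
  ext x
  constructor
  · rintro ⟨G0, h1, h2, rfl⟩
    exact ⟨G0, h1, h2, key G0 h1 h2⟩
  · rintro ⟨G0, h1, h2, rfl⟩
    exact ⟨G0, h1, h2, (key G0 h1 h2).symm⟩
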